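/- Let m ≥ 2 and let A be a complex m×m matrix with det(A^{(k)}) ≠ 0 for k = 1, …, m and det(Â^{(k)}) ≠ 0 for k = 1, …, m-1, where Â is the m×(m-1) matrix obtained from A by deleting its first column. Let K be the m×m matrix with K i i = 1 for all i, K i (i+1) = 1 for all i < m-1, and all other entries 0. Then there exist a unique complex lower triangular m×m matrix B and a unique complex upper triangular m×m matrix C whose (0,0) entry equals 1 and whose remaining first-row entries are 0, such that A = B · K · C. -/

import Mathlib

open Matrix

/-- The `m × m` matrix `K` with `1`'s on the diagonal and on the superdiagonal, and
zeros elsewhere. -/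
def modK (m : ℕ) : Matrix (Fin m) (Fin m) ℂ :=
  Matrix.of fun i j => if (j : ℕ) = (i : ℕ) ∨ (j : ℕ) = (i : ℕ) + 1 then 1 else 0

open Finset

/-- Explicit inverse of `modK`. -/
def modL (m : ℕ) : Matrix (Fin m) (Fin m) ℂ :=
  Matrix.of fun i j => if (i : ℕ) ≤ (j : ℕ) then (-1 : ℂ) ^ ((j : ℕ) - (i : ℕ)) else 0

lemma modK_mul_modL (m : ℕ) : modK m * modL m = 1 := by
  ext i j
  rw [Matrix.mul_apply]
  by_cases him : (i : ℕ) + 1 < m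
  · have hsum : ∀ k : Fin m, modK m i k * modL m k j
        = (if k = i then modL m i j else 0)
          + (if k = ⟨(i : ℕ) + 1, him⟩ then modL m ⟨(i : ℕ) + 1, him⟩ j else 0) := by
      intro k
      simp only [modK, Matrix.of_apply]
      rcases eq_or_ne k i with rfl | hk
      · have : ¬ ((k : ℕ) = (k : ℕ) + 1) := by omega
        simp [Fin.ext_iff, this]
      · rcases eq_or_ne k ⟨(i : ℕ) + 1, him⟩ with rfl | hk2
        · have : ¬ ((i : ℕ) + 1 = (i : ℕ)) := by omega
          simp [Fin.ext_iff, this]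
        · have h1 : ¬ ((k : ℕ) = (i : ℕ)) := fun h => hk (Fin.ext h)
          have h2 : ¬ ((k : ℕ) = (i : ℕ) + 1) := fun h => hk2 (Fin.ext h)
          simp [h1, h2, hk, hk2]
    rw [Finset.sum_congr rfl fun k _ => hsum k, Finset.sum_add_distrib,
      Finset.sum_ite_eq' univ i, Finset.sum_ite_eq' univ (⟨(i : ℕ) + 1, him⟩ : Fin m)]
    simp only [mem_univ, if_true, modL, Matrix.of_apply, Matrix.one_apply]
    rcases lt_trichotomy (i : ℕ) (j : ℕ) with h | h | h
    · have h1 : (i : ℕ) ≤ j := le_of_lt h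
      have hne : i ≠ j := by intro e; exact absurd (congrArg Fin.val e) (by omega)
      by_cases h2 : (i : ℕ) + 1 ≤ (j : ℕ)
      · have : (j : ℕ) - (i : ℕ) = ((j : ℕ) - ((i : ℕ) + 1)) + 1 := by omega
        simp [h1, h2, hne, this, pow_succ]
      · have hji : (j : ℕ) = (i : ℕ) + 1 - 1 := by omega
        simp [h1, h2, hne]
        omega
    · have : i = j := Fin.ext h
      subst this
      have h2 : ¬ ((i : ℕ) + 1 ≤ (i : ℕ)) := by omega
      simp [h2]
    · have h1 : ¬ ((i : ℕ) ≤ (j : ℕ)) := by omega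
      have h2 : ¬ ((i : ℕ) + 1 ≤ (j : ℕ)) := by omega
      have hne : i ≠ j := by intro e; exact absurd (congrArg Fin.val e) (by omega)
      simp [h1, h2, hne]
  · -- i is the last index
    have hsum : ∀ k : Fin m, modK m i k * modL m k j = (if k = i then modL m i j else 0) := by
      intro k
      simp only [modK, Matrix.of_apply]
      rcases eq_or_ne k i with rfl | hk
      · simp
      · have h1 : ¬ ((k : ℕ) = (i : ℕ)) := fun h => hk (Fin.ext h)
        have h2 : ¬ ((k : ℕ) = (i : ℕ) + 1) := by have := k.isLt; omega
        simp [h1, h2, hk]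
    rw [Finset.sum_congr rfl fun k _ => hsum k, Finset.sum_ite_eq' univ i]
    simp only [mem_univ, if_true, modL, Matrix.of_apply, Matrix.one_apply]
    have hj := j.isLt
    rcases eq_or_ne i j with rfl | hne
    · simp
    · have h1 : ¬ ((i : ℕ) ≤ (j : ℕ)) := by
        have : (j : ℕ) ≠ (i : ℕ) := fun h => hne (Fin.ext h.symm)
        omega
      simp [h1, hne]

lemma modL_mul_modK (m : ℕ) : modL m * modK m = 1 :=
  mul_eq_one_comm.mp (modK_mul_modL m)

lemma modK_inv (m : ℕ) : (modK m)⁻¹ = modL m :=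
  Matrix.inv_eq_right_inv (modK_mul_modL m)

lemma isUnit_modK_det (m : ℕ) : IsUnit (modK m).det :=
  IsUnit.of_mul_eq_one _ (by rw [← Matrix.det_mul, modK_mul_modL, Matrix.det_one])

lemma modK_blockTriangular (m : ℕ) : (modK m).BlockTriangular id := by
  intro i j hij
  simp only [id_eq] at hij
  have : ¬ ((j : ℕ) = (i : ℕ) ∨ (j : ℕ) = (i : ℕ) + 1) := by
    have : (j : ℕ) < (i : ℕ) := hij
    omega
  simp [modK, this]

lemma modK_mul_apply {m : ℕ} (C : Matrix (Fin m) (Fin m) ℂ) (i j : Fin m) :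
    (modK m * C) i j = C i j + (if h : (i : ℕ) + 1 < m then C ⟨(i : ℕ) + 1, h⟩ j else 0) := by
  rw [Matrix.mul_apply]
  by_cases him : (i : ℕ) + 1 < m
  · have hsum : ∀ k : Fin m, modK m i k * C k j
        = (if k = i then C i j else 0)
          + (if k = ⟨(i : ℕ) + 1, him⟩ then C ⟨(i : ℕ) + 1, him⟩ j else 0) := by
      intro k
      simp only [modK, Matrix.of_apply]
      rcases eq_or_ne k i with rfl | hk
      · have : ¬ ((k : ℕ) = (k : ℕ) + 1) := by omega
        simp [Fin.ext_iff, this]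
      · rcases eq_or_ne k ⟨(i : ℕ) + 1, him⟩ with rfl | hk2
        · have : ¬ ((i : ℕ) + 1 = (i : ℕ)) := by omega
          simp [Fin.ext_iff, this]
        · have h1 : ¬ ((k : ℕ) = (i : ℕ)) := fun h => hk (Fin.ext h)
          have h2 : ¬ ((k : ℕ) = (i : ℕ) + 1) := fun h => hk2 (Fin.ext h)
          simp [h1, h2, hk, hk2]
    rw [Finset.sum_congr rfl fun k _ => hsum k, Finset.sum_add_distrib,
      Finset.sum_ite_eq' univ i, Finset.sum_ite_eq' univ (⟨(i : ℕ) + 1, him⟩ : Fin m)]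
    simp [him]
  · have hsum : ∀ k : Fin m, modK m i k * C k j = (if k = i then C i j else 0) := by
      intro k
      simp only [modK, Matrix.of_apply]
      rcases eq_or_ne k i with rfl | hk
      · simp
      · have h1 : ¬ ((k : ℕ) = (i : ℕ)) := fun h => hk (Fin.ext h)
        have h2 : ¬ ((k : ℕ) = (i : ℕ) + 1) := by have := k.isLt; omega
        simp [h1, h2, hk]
    rw [Finset.sum_congr rfl fun k _ => hsum k, Finset.sum_ite_eq' univ i]
    simp [him]

lemma lu_uniq {n : ℕ} (A : Matrix (Fin (n+1)) (Fin (n+1)) ℂ) (hA : A.det ≠ 0)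
    (B₁ C₁ B₂ C₂ : Matrix (Fin (n+1)) (Fin (n+1)) ℂ)
    (hB₁ : ∀ i j, i < j → B₁ i j = 0) (hC₁ : ∀ i j, j < i → C₁ i j = 0)
    (hC₁0 : C₁ 0 0 = 1) (hC₁r : ∀ j, j ≠ 0 → C₁ 0 j = 0)
    (hA₁ : A = B₁ * modK (n+1) * C₁)
    (hB₂ : ∀ i j, i < j → B₂ i j = 0) (hC₂ : ∀ i j, j < i → C₂ i j = 0)
    (hC₂0 : C₂ 0 0 = 1) (hC₂r : ∀ j, j ≠ 0 → C₂ 0 j = 0)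
    (hA₂ : A = B₂ * modK (n+1) * C₂) :
    B₁ = B₂ ∧ C₁ = C₂ := by
  set K := modK (n+1) with hK
  have hdetA₁ : A.det = B₁.det * K.det * C₁.det := by rw [hA₁, Matrix.det_mul, Matrix.det_mul]
  have hdetA₂ : A.det = B₂.det * K.det * C₂.det := by rw [hA₂, Matrix.det_mul, Matrix.det_mul]
  have hdB₁ : IsUnit B₁.det := isUnit_iff_ne_zero.2 fun h => hA (by rw [hdetA₁, h]; ring)
  have hdB₂ : IsUnit B₂.det := isUnit_iff_ne_zero.2 fun h => hA (by rw [hdetA₂, h]; ring)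
  have hdC₁ : IsUnit C₁.det := isUnit_iff_ne_zero.2 fun h => hA (by rw [hdetA₁, h]; ring)
  have hdC₂ : IsUnit C₂.det := isUnit_iff_ne_zero.2 fun h => hA (by rw [hdetA₂, h]; ring)
  have hdK : IsUnit K.det := isUnit_modK_det (n+1)
  have hC₁' : C₁.BlockTriangular id := fun i j h => hC₁ i j h
  have hC₂' : C₂.BlockTriangular id := fun i j h => hC₂ i j h
  have hB₁' : B₁.BlockTriangular (OrderDual.toDual : Fin (n+1) → (Fin (n+1))ᵒᵈ) :=
    fun i j h => hB₁ i j h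
  have hB₂' : B₂.BlockTriangular (OrderDual.toDual : Fin (n+1) → (Fin (n+1))ᵒᵈ) :=
    fun i j h => hB₂ i j h
  haveI := B₂.invertibleOfIsUnitDet hdB₂
  haveI := C₁.invertibleOfIsUnitDet hdC₁
  haveI := K.invertibleOfIsUnitDet hdK
  set P := B₂⁻¹ * B₁ with hPdef
  have hEq : B₁ * K * C₁ = B₂ * K * C₂ := hA₁.symm.trans hA₂
  have hPK : P * (K * C₁) = K * C₂ := by
    calc P * (K * C₁) = B₂⁻¹ * (B₁ * K * C₁) := by
          rw [hPdef]; simp only [Matrix.mul_assoc]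
      _ = B₂⁻¹ * (B₂ * (K * C₂)) := by rw [hEq, Matrix.mul_assoc]
      _ = K * C₂ := by rw [Matrix.nonsing_inv_mul_cancel_left _ _ hdB₂]
  have hdKC₁ : IsUnit (K * C₁).det := by rw [Matrix.det_mul]; exact hdK.mul hdC₁
  have hPupper : P.BlockTriangular id := by
    have : P = K * C₂ * (C₁⁻¹ * K⁻¹) := by
      rw [← Matrix.mul_inv_rev, ← hPK, Matrix.mul_nonsing_inv_cancel_right _ _ hdKC₁]
    rw [this]
    exact ((modK_blockTriangular (n+1)).mul hC₂').mul
      ((blockTriangular_inv_of_blockTriangular hC₁').mul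
        (blockTriangular_inv_of_blockTriangular (modK_blockTriangular (n+1))))
  have hPlower : P.BlockTriangular (OrderDual.toDual : Fin (n+1) → (Fin (n+1))ᵒᵈ) :=
    (blockTriangular_inv_of_blockTriangular hB₂').mul hB₁'
  have hPdiag : ∀ i j : Fin (n+1), i ≠ j → P i j = 0 := by
    intro i j hij
    rcases lt_or_gt_of_ne hij with h | h
    · exact hPlower h
    · exact hPupper h
  have hrow : ∀ i j : Fin (n+1), P i i * (K * C₁) i j = (K * C₂) i j := by
    intro i j
    have := congrFun (congrFun hPK i) j
    rw [Matrix.mul_apply] at this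
    rwa [Finset.sum_eq_single i (fun k _ hk => by rw [hPdiag i k (Ne.symm hk), zero_mul])
      (fun h => absurd (mem_univ i) h)] at this
  have hdiagC₁ : ∀ i, C₁ i i ≠ 0 := by
    have hprod : C₁.det = ∏ i, C₁ i i := Matrix.det_of_upperTriangular hC₁'
    intro i hi
    exact hdC₁.ne_zero (by rw [hprod]; exact Finset.prod_eq_zero (mem_univ i) hi)
  have claim : ∀ i : Fin (n+1), ∀ j, C₁ i j = C₂ i j := by
    intro i
    induction i using Fin.induction with
    | zero =>
      intro j
      rcases eq_or_ne j 0 with rfl | hj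
      · rw [hC₁0, hC₂0]
      · rw [hC₁r j hj, hC₂r j hj]
    | succ i ih =>
      have hlt : ((i.castSucc : Fin (n+1)) : ℕ) + 1 < n + 1 := by
        simp only [Fin.coe_castSucc]; omega
      have hmk : (⟨((i.castSucc : Fin (n+1)) : ℕ) + 1, hlt⟩ : Fin (n+1)) = i.succ := by
        apply Fin.ext; simp
      have hKC : ∀ (C : Matrix (Fin (n+1)) (Fin (n+1)) ℂ) (j : Fin (n+1)),
          (K * C) i.castSucc j = C i.castSucc j + C i.succ j := by
        intro C j
        rw [hK, modK_mul_apply, dif_pos hlt, hmk]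
      have hP1 : P i.castSucc i.castSucc = 1 := by
        have h1 := hrow i.castSucc i.castSucc
        rw [hKC, hKC, hC₁ _ _ (Fin.castSucc_lt_succ (i := i)), hC₂ _ _ (Fin.castSucc_lt_succ (i := i)),
          add_zero, add_zero, ← ih i.castSucc] at h1
        exact mul_right_cancel₀ (hdiagC₁ i.castSucc) (by rw [h1, one_mul])
      intro j
      have h2 := hrow i.castSucc j
      rw [hKC, hKC, hP1, one_mul, ih j] at h2
      exact add_left_cancel h2
  have hCeq : C₁ = C₂ := by ext i j; exact claim i j
  refine ⟨?_, hCeq⟩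
  have h1 : B₁ * (K * C₁) = B₂ * (K * C₁) := by
    rw [← Matrix.mul_assoc, ← Matrix.mul_assoc, ← hA₁, hCeq, ← hA₂]
  calc B₁ = B₁ * (K * C₁) * (K * C₁)⁻¹ := by
        rw [Matrix.mul_nonsing_inv_cancel_right _ _ hdKC₁]
    _ = B₂ * (K * C₁) * (K * C₁)⁻¹ := by rw [h1]
    _ = B₂ := by rw [Matrix.mul_nonsing_inv_cancel_right _ _ hdKC₁]

lemma lu_exists (n : ℕ) : ∀ (A : Matrix (Fin (n+1)) (Fin (n+1)) ℂ),
    (∀ k : ℕ, 1 ≤ k → ∀ hk : k ≤ n+1,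
      (A.submatrix (Fin.castLE hk) (Fin.castLE hk)).det ≠ 0) →
    (∀ k : ℕ, 1 ≤ k → ∀ hk : k ≤ n,
      (Matrix.of fun a b : Fin k =>
        A (Fin.castLE (le_trans hk (Nat.le_succ n)) a)
          ⟨(b : ℕ) + 1, by have := b.isLt; omega⟩).det ≠ 0) →
    ∃ B C : Matrix (Fin (n+1)) (Fin (n+1)) ℂ,
      (∀ i j, i < j → B i j = 0) ∧ (∀ i j, j < i → C i j = 0) ∧
      C 0 0 = 1 ∧ (∀ j, j ≠ 0 → C 0 j = 0) ∧ A = B * modK (n+1) * C := by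
  induction n with
  | zero =>
    intro A _ _
    refine ⟨A, 1, ?_, ?_, ?_, ?_, ?_⟩
    · intro i j hij; exact absurd hij (by omega)
    · intro i j hij; exact absurd hij (by omega)
    · simp
    · intro j hj; exact absurd (Fin.ext (by omega)) hj
    · have hK1 : modK 1 = 1 := by
        ext i j
        fin_cases i; fin_cases j; simp [modK]
      rw [hK1, Matrix.mul_one, Matrix.mul_one]
  | succ n IH =>
    intro A hdet hdet'
    set A' : Matrix (Fin (n+1)) (Fin (n+1)) ℂ := A.submatrix Fin.castSucc Fin.castSucc
      with hA'def
    -- transfer the hypotheses to A'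
    have hdetA' : ∀ k : ℕ, 1 ≤ k → ∀ hk : k ≤ n+1,
        (A'.submatrix (Fin.castLE hk) (Fin.castLE hk)).det ≠ 0 := by
      intro k hk1 hk
      have h2 : k ≤ n + 2 := by omega
      have heq : A'.submatrix (Fin.castLE hk) (Fin.castLE hk)
          = A.submatrix (Fin.castLE h2) (Fin.castLE h2) := by
        ext a b; rfl
      rw [heq]; exact hdet k hk1 h2
    have hdet'A' : ∀ k : ℕ, 1 ≤ k → ∀ hk : k ≤ n,
        (Matrix.of fun a b : Fin k =>
          A' (Fin.castLE (le_trans hk (Nat.le_succ n)) a)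
            ⟨(b : ℕ) + 1, by have := b.isLt; omega⟩).det ≠ 0 := by
      intro k hk1 hk
      have h2 : k ≤ n + 1 := by omega
      have heq : (Matrix.of fun a b : Fin k =>
          A' (Fin.castLE (le_trans hk (Nat.le_succ n)) a)
            ⟨(b : ℕ) + 1, by have := b.isLt; omega⟩)
          = (Matrix.of fun a b : Fin k =>
          A (Fin.castLE (le_trans h2 (Nat.le_succ (n+1))) a)
            ⟨(b : ℕ) + 1, by have := b.isLt; omega⟩) := by
        ext a b; rfl
      rw [heq]; exact hdet' k hk1 h2
    obtain ⟨B', C', hB', hC', hC'00, hC'row, hAeq'⟩ := IH A' hdetA' hdet'A'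
    set K1 := modK (n+1) with hK1def
    -- invertibility facts
    have hdetA'0 : A'.det ≠ 0 := by
      have h2 : n + 1 ≤ n + 2 := by omega
      have heq : A' = A.submatrix (Fin.castLE h2) (Fin.castLE h2) := by ext a b; rfl
      rw [heq]; exact hdet (n+1) (by omega) h2
    have hdetfac : A'.det = B'.det * K1.det * C'.det := by
      rw [hAeq', Matrix.det_mul, Matrix.det_mul]
    have hdB' : IsUnit B'.det :=
      isUnit_iff_ne_zero.2 fun h => hdetA'0 (by rw [hdetfac, h]; ring)
    have hdC' : IsUnit C'.det :=
      isUnit_iff_ne_zero.2 fun h => hdetA'0 (by rw [hdetfac, h]; ring)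
    have hdK1 : IsUnit K1.det := isUnit_modK_det (n+1)
    have hdK1C' : IsUnit (K1 * C').det := by rw [Matrix.det_mul]; exact hdK1.mul hdC'
    -- the data used to build the last row and column
    set v : Fin (n+1) → ℂ := fun i => A i.castSucc (Fin.last (n+1)) with hvdef
    set w : Fin (n+1) → ℂ := fun j => A (Fin.last (n+1)) j.castSucc with hwdef
    set u : Fin (n+1) → ℂ := B'⁻¹ *ᵥ v with hudef
    set e : Fin (n+1) → ℂ := fun l => if (l : ℕ) = n then 1 else 0 with hedef
    set γ : ℂ := (-1 : ℂ) ^ n * (modL (n+1) *ᵥ u) 0 with hγdef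
    set c : Fin (n+1) → ℂ := modL (n+1) *ᵥ u - γ • (modL (n+1) *ᵥ e) with hcdef
    set brow : Fin (n+1) → ℂ := Matrix.vecMul w (K1 * C')⁻¹ with hbrowdef
    have hBu : B' *ᵥ u = v := by
      rw [hudef, Matrix.mulVec_mulVec, Matrix.mul_nonsing_inv _ hdB', Matrix.one_mulVec]
    have hKL : ∀ x : Fin (n+1) → ℂ, K1 *ᵥ (modL (n+1) *ᵥ x) = x := by
      intro x
      rw [Matrix.mulVec_mulVec, hK1def, modK_mul_modL, Matrix.one_mulVec]
    have hu : K1 *ᵥ c + γ • e = u := by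
      rw [hcdef, Matrix.mulVec_sub, Matrix.mulVec_smul, hKL, hKL]
      abel
    have hbrow : brow ᵥ* (K1 * C') = w := by
      rw [hbrowdef, Matrix.vecMul_vecMul, Matrix.nonsing_inv_mul _ hdK1C', Matrix.vecMul_one]
    -- the sign fact
    have hsq : ((-1 : ℂ) ^ n) * ((-1 : ℂ) ^ n) = 1 := by
      rw [← pow_add]; exact Even.neg_one_pow ⟨n, rfl⟩
    -- the first entry of c vanishes
    have hLe : (modL (n+1) *ᵥ e) 0 = (-1 : ℂ) ^ n := by
      rw [Matrix.mulVec]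
      show (fun j => modL (n+1) 0 j) ⬝ᵥ e = _
      rw [dotProduct]
      have : ∀ l : Fin (n+1), modL (n+1) 0 l * e l
          = if l = (⟨n, by omega⟩ : Fin (n+1)) then modL (n+1) 0 ⟨n, by omega⟩ else 0 := by
        intro l
        rcases eq_or_ne l (⟨n, by omega⟩ : Fin (n+1)) with rfl | hl
        · simp [hedef]
        · have : ¬ ((l : ℕ) = n) := fun h => hl (Fin.ext h)
          simp [hedef, this, hl]
      rw [Finset.sum_congr rfl fun l _ => this l, Finset.sum_ite_eq' univ]
      simp [modL]
    have hc0 : c 0 = 0 := by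
      have : c 0 = (modL (n+1) *ᵥ u) 0 - γ * (modL (n+1) *ᵥ e) 0 := by
        rw [hcdef]; simp
      rw [this, hLe, hγdef]
      have h2 : ((-1:ℂ)^n * (modL (n+1) *ᵥ u) 0) * (-1:ℂ)^n = (modL (n+1) *ᵥ u) 0 := by
        rw [mul_comm ((-1:ℂ)^n) ((modL (n+1) *ᵥ u) 0), mul_assoc, hsq, mul_one]
      rw [h2, sub_self]
    -- γ is nonzero, by the hat-minor hypothesis
    have hγ : γ ≠ 0 := by
      intro hγ0
      have hx0 : (modL (n+1) *ᵥ u) 0 = 0 := by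
        have h := hγ0
        rw [hγdef] at h
        rcases mul_eq_zero.1 h with h' | h'
        · exact absurd h' (pow_ne_zero _ (by norm_num))
        · exact h'
      set N : Matrix (Fin (n+1)) (Fin (n+1)) ℂ := Matrix.of fun l b =>
        if hb : (b : ℕ) < n then C' l ⟨(b:ℕ)+1, by omega⟩ else (modL (n+1) *ᵥ u) l
        with hNdef
      have hNrow : ∀ b : Fin (n+1), N 0 b = 0 := by
        intro b
        rw [hNdef]
        by_cases hb : (b : ℕ) < n
        · simp only [Matrix.of_apply, dif_pos hb]
          exact hC'row ⟨(b:ℕ)+1, by omega⟩ (fun h => by have := congrArg Fin.val h; simp at this)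
        · simp only [Matrix.of_apply, dif_neg hb]
          exact hx0
      have hNdet : N.det = 0 := Matrix.det_eq_zero_of_row_eq_zero 0 hNrow
      have hhat : (Matrix.of fun a b : Fin (n+1) =>
          A (Fin.castLE (le_trans (le_refl (n+1)) (Nat.le_succ (n+1))) a)
            ⟨(b : ℕ) + 1, by have := b.isLt; omega⟩) = B' * K1 * N := by
        ext a b
        by_cases hb : (b : ℕ) < n
        · have h1 : (B' * K1 * N) a b = (B' * K1 * C') a ⟨(b:ℕ)+1, by omega⟩ := by
            rw [Matrix.mul_apply, Matrix.mul_apply]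
            refine Finset.sum_congr rfl fun l _ => ?_
            rw [hNdef]; simp only [Matrix.of_apply, dif_pos hb]
          rw [h1, ← hAeq']
          rfl
        · have h1 : (B' * K1 * N) a b = ((B' * K1) *ᵥ (modL (n+1) *ᵥ u)) a := by
            rw [Matrix.mul_apply]
            show _ = (fun l => (B' * K1) a l) ⬝ᵥ (modL (n+1) *ᵥ u)
            rw [dotProduct]
            refine Finset.sum_congr rfl fun l _ => ?_
            rw [hNdef]; simp only [Matrix.of_apply, dif_neg hb]
          rw [h1, ← Matrix.mulVec_mulVec, hKL, hBu]
          have hbn : (b : ℕ) = n := by have := b.isLt; omega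
          show A _ _ = A a.castSucc (Fin.last (n+1))
          congr 1
          exact Fin.ext (by simp [hbn])
      exact hdet' (n+1) (by omega) (le_refl (n+1))
        (by rw [hhat, Matrix.det_mul, Matrix.det_mul, hNdet, mul_zero])
    -- remaining scalar data
    set dot : ℂ := ∑ k, brow k * (K1 *ᵥ c) k with hdotdef
    set β : ℂ := (A (Fin.last (n+1)) (Fin.last (n+1)) - dot) / γ - brow ⟨n, by omega⟩
      with hβdef
    -- the matrices
    set B : Matrix (Fin (n+2)) (Fin (n+2)) ℂ := Matrix.of fun i j =>
      if hi : (i : ℕ) < n+1 then (if hj : (j : ℕ) < n+1 then B' ⟨i, hi⟩ ⟨j, hj⟩ else 0)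
      else (if hj : (j : ℕ) < n+1 then brow ⟨j, hj⟩ else β) with hBdef
    set C : Matrix (Fin (n+2)) (Fin (n+2)) ℂ := Matrix.of fun i j =>
      if hi : (i : ℕ) < n+1 then (if hj : (j : ℕ) < n+1 then C' ⟨i, hi⟩ ⟨j, hj⟩ else c ⟨i, hi⟩)
      else (if hj : (j : ℕ) < n+1 then 0 else γ) with hCdef
    -- entry lemmas
    have hBtl : ∀ i' j' : Fin (n+1), B i'.castSucc j'.castSucc = B' i' j' := by
      intro i' j'; rw [hBdef]
      have hi : (i':ℕ) ≤ n := by omega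
      have hj : (j':ℕ) ≤ n := by omega
      simp [i'.isLt, j'.isLt, hi, hj]
    have hBtr : ∀ i' : Fin (n+1), B i'.castSucc (Fin.last (n+1)) = 0 := by
      intro i'; rw [hBdef]
      have hi : (i':ℕ) ≤ n := by omega
      simp [i'.isLt, hi, not_lt.2 hi]
    have hBbl : ∀ j' : Fin (n+1), B (Fin.last (n+1)) j'.castSucc = brow j' := by
      intro j'; rw [hBdef]
      have hj : (j':ℕ) ≤ n := by omega
      simp [j'.isLt, hj, not_lt.2 hj]
    have hBbr : B (Fin.last (n+1)) (Fin.last (n+1)) = β := by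
      rw [hBdef]; simp
    have hCtl : ∀ i' j' : Fin (n+1), C i'.castSucc j'.castSucc = C' i' j' := by
      intro i' j'; rw [hCdef]
      have hi : (i':ℕ) ≤ n := by omega
      have hj : (j':ℕ) ≤ n := by omega
      simp [i'.isLt, j'.isLt, hi, hj]
    have hCtr : ∀ i' : Fin (n+1), C i'.castSucc (Fin.last (n+1)) = c i' := by
      intro i'; rw [hCdef]
      have hi : (i':ℕ) ≤ n := by omega
      simp [i'.isLt, hi, not_lt.2 hi]
    have hCbl : ∀ j' : Fin (n+1), C (Fin.last (n+1)) j'.castSucc = 0 := by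
      intro j'; rw [hCdef]
      have hj : (j':ℕ) ≤ n := by omega
      simp [j'.isLt, hj, not_lt.2 hj]
    have hCbr : C (Fin.last (n+1)) (Fin.last (n+1)) = γ := by
      rw [hCdef]; simp
    -- modK entry lemmas
    have hKcc : ∀ k l : Fin (n+1), modK (n+2) k.castSucc l.castSucc = K1 k l := by
      intro k l; rfl
    have hKcl : ∀ k : Fin (n+1),
        modK (n+2) k.castSucc (Fin.last (n+1)) = if (k:ℕ) = n then 1 else 0 := by
      intro k
      have hk := k.isLt
      simp only [modK, Matrix.of_apply, Fin.coe_castSucc, Fin.val_last]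
      by_cases h : (k : ℕ) = n
      · have h2 : n + 1 = (k:ℕ) + 1 := by omega
        simp [h, h2]
      · have h1 : ¬ (n + 1 = (k:ℕ)) := by omega
        have h2 : ¬ (n + 1 = (k:ℕ) + 1) := by omega
        simp [h1, h2, h, Ne.symm h]
    have hKlc : ∀ l : Fin (n+1), modK (n+2) (Fin.last (n+1)) l.castSucc = 0 := by
      intro l
      have hl := l.isLt
      simp only [modK, Matrix.of_apply, Fin.coe_castSucc, Fin.val_last]
      have h1 : ¬ ((l:ℕ) = n + 1) := by omega
      have h2 : ¬ ((l:ℕ) = n + 1 + 1) := by omega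
      simp [h1, h2]
    have hKll : modK (n+2) (Fin.last (n+1)) (Fin.last (n+1)) = 1 := by
      simp [modK]
    -- sum helpers
    have hsumite : ∀ f : Fin (n+1) → ℂ,
        (∑ k, f k * (if (k:ℕ) = n then 1 else 0)) = f ⟨n, by omega⟩ := by
      intro f
      have h : ∀ k : Fin (n+1), f k * (if (k:ℕ) = n then 1 else 0)
          = if k = (⟨n, by omega⟩ : Fin (n+1)) then f k else 0 := by
        intro k
        rcases eq_or_ne k (⟨n, by omega⟩ : Fin (n+1)) with rfl | hk
        · simp
        · have : ¬ ((k:ℕ) = n) := fun h' => hk (Fin.ext h')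
          simp [this, hk]
      rw [Finset.sum_congr rfl fun k _ => h k, Finset.sum_ite_eq' univ]
      simp
    have hBe : ∀ i' : Fin (n+1), (B' *ᵥ e) i' = B' i' ⟨n, by omega⟩ := by
      intro i'
      show (∑ k, B' i' k * e k) = _
      rw [hedef]
      exact hsumite _
    have hvsum : v = (B' * K1) *ᵥ c + γ • (B' *ᵥ e) := by
      rw [← hBu, ← hu, Matrix.mulVec_add, Matrix.mulVec_smul, Matrix.mulVec_mulVec]
    -- inner-sum lemmas
    have hinnerc : ∀ (i' : Fin (n+1)) (l : Fin (n+2)),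
        (∑ k, B i'.castSucc k * modK (n+2) k l)
          = ∑ k' : Fin (n+1), B' i' k' * modK (n+2) k'.castSucc l := by
      intro i' l
      rw [Fin.sum_univ_castSucc, hBtr i', zero_mul, add_zero]
      exact Finset.sum_congr rfl fun k' _ => by rw [hBtl]
    have hinnerl : ∀ (l : Fin (n+2)),
        (∑ k, B (Fin.last (n+1)) k * modK (n+2) k l)
          = (∑ k' : Fin (n+1), brow k' * modK (n+2) k'.castSucc l)
            + β * modK (n+2) (Fin.last (n+1)) l := by
      intro l
      rw [Fin.sum_univ_castSucc, hBbr]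
      congr 1
      exact Finset.sum_congr rfl fun k' _ => by rw [hBbl]
    have hexp : ∀ i j : Fin (n+2), (B * modK (n+2) * C) i j
        = ∑ l, (∑ k, B i k * modK (n+2) k l) * C l j := by
      intro i j
      rw [Matrix.mul_apply]
      exact Finset.sum_congr rfl fun l _ => by rw [Matrix.mul_apply]
    -- the main equation
    have hmain : A = B * modK (n+2) * C := by
      ext i j
      induction i using Fin.lastCases with
      | cast i' =>
        induction j using Fin.lastCases with
        | cast j' =>
          rw [hexp, Fin.sum_univ_castSucc, hCbl j', mul_zero, add_zero]
          have hterm : ∀ l' : Fin (n+1),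
              (∑ k, B i'.castSucc k * modK (n+2) k l'.castSucc) * C l'.castSucc j'.castSucc
                = (∑ k' : Fin (n+1), B' i' k' * K1 k' l') * C' l' j' := by
            intro l'
            rw [hinnerc, hCtl]
            simp only [hKcc]
          rw [Finset.sum_congr rfl fun l' _ => hterm l']
          have h2 : A i'.castSucc j'.castSucc = (B' * K1 * C') i' j' := by
            rw [← hAeq']; rfl
          rw [h2, Matrix.mul_apply]
          exact Finset.sum_congr rfl fun l' _ => by rw [Matrix.mul_apply]
        | last =>
          rw [hexp, Fin.sum_univ_castSucc]
          have hterm : ∀ l' : Fin (n+1),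
              (∑ k, B i'.castSucc k * modK (n+2) k l'.castSucc) * C l'.castSucc (Fin.last (n+1))
                = (B' * K1) i' l' * c l' := by
            intro l'
            rw [hinnerc, hCtr]
            simp only [hKcc, Matrix.mul_apply]
          rw [Finset.sum_congr rfl fun l' _ => hterm l']
          have hlastterm :
              (∑ k, B i'.castSucc k * modK (n+2) k (Fin.last (n+1)))
                * C (Fin.last (n+1)) (Fin.last (n+1)) = B' i' ⟨n, by omega⟩ * γ := by
            rw [hinnerc, hCbr]
            congr 1
            rw [Finset.sum_congr rfl fun k' _ => by rw [hKcl k']]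
            exact hsumite _
          rw [hlastterm]
          have h2 : A i'.castSucc (Fin.last (n+1)) = v i' := rfl
          rw [h2, hvsum, Pi.add_apply, Pi.smul_apply, hBe, smul_eq_mul]
          rw [show ((B' * K1) *ᵥ c) i' = ∑ l', (B' * K1) i' l' * c l' from rfl]
          ring
      | last =>
        induction j using Fin.lastCases with
        | cast j' =>
          rw [hexp, Fin.sum_univ_castSucc, hCbl j', mul_zero, add_zero]
          have hterm : ∀ l' : Fin (n+1),
              (∑ k, B (Fin.last (n+1)) k * modK (n+2) k l'.castSucc) * C l'.castSucc j'.castSucc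
                = (brow ᵥ* K1) l' * C' l' j' := by
            intro l'
            rw [hinnerl, hKlc, mul_zero, add_zero, hCtl]
            simp only [hKcc, Matrix.vecMul, dotProduct]

          rw [Finset.sum_congr rfl fun l' _ => hterm l']
          have h2 : A (Fin.last (n+1)) j'.castSucc = w j' := rfl
          rw [h2, ← hbrow, ← Matrix.vecMul_vecMul]
          rfl
        | last =>
          rw [hexp, Fin.sum_univ_castSucc]
          have hterm : ∀ l' : Fin (n+1),
              (∑ k, B (Fin.last (n+1)) k * modK (n+2) k l'.castSucc)
                * C l'.castSucc (Fin.last (n+1)) = (brow ᵥ* K1) l' * c l' := by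
            intro l'
            rw [hinnerl, hKlc, mul_zero, add_zero, hCtr]
            simp only [hKcc, Matrix.vecMul, dotProduct]

          rw [Finset.sum_congr rfl fun l' _ => hterm l']
          have hlastterm :
              (∑ k, B (Fin.last (n+1)) k * modK (n+2) k (Fin.last (n+1)))
                * C (Fin.last (n+1)) (Fin.last (n+1)) = (brow ⟨n, by omega⟩ + β) * γ := by
            rw [hinnerl, hKll, mul_one, hCbr]
            congr 1
            congr 1
            rw [Finset.sum_congr rfl fun k' _ => by rw [hKcl k']]
            exact hsumite _
          rw [hlastterm]
          have hdotsum : (∑ l', (brow ᵥ* K1) l' * c l') = dot := by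
            rw [hdotdef]
            show (brow ᵥ* K1) ⬝ᵥ c = brow ⬝ᵥ (K1 *ᵥ c)
            rw [← Matrix.dotProduct_mulVec]
          rw [hdotsum]
          have h3 : brow ⟨n, by omega⟩ + β
              = (A (Fin.last (n+1)) (Fin.last (n+1)) - dot) / γ := by
            rw [hβdef]; ring
          rw [h3, div_mul_cancel₀ _ hγ]
          ring
    -- assemble
    refine ⟨B, C, ?_, ?_, ?_, ?_, hmain⟩
    · intro i j hij
      have hij' : (i:ℕ) < (j:ℕ) := hij
      rw [hBdef]
      simp only [Matrix.of_apply]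
      by_cases hi : (i:ℕ) < n+1
      · rw [dif_pos hi]
        by_cases hj : (j:ℕ) < n+1
        · rw [dif_pos hj]
          exact hB' _ _ (Fin.mk_lt_mk.2 hij')
        · rw [dif_neg hj]
      · exfalso; have := j.isLt; omega
    · intro i j hij
      have hij' : (j:ℕ) < (i:ℕ) := hij
      rw [hCdef]
      simp only [Matrix.of_apply]
      by_cases hi : (i:ℕ) < n+1
      · have hj : (j:ℕ) < n+1 := by omega
        rw [dif_pos hi, dif_pos hj]
        exact hC' _ _ (Fin.mk_lt_mk.2 hij')
      · rw [dif_neg hi]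
        have hj : (j:ℕ) < n+1 := by have := i.isLt; omega
        rw [dif_pos hj]
    · rw [show (0 : Fin (n+2)) = (0 : Fin (n+1)).castSucc from (Fin.castSucc_zero).symm,
        hCtl, hC'00]
    · intro j hj
      rw [show (0 : Fin (n+2)) = (0 : Fin (n+1)).castSucc from (Fin.castSucc_zero).symm]
      induction j using Fin.lastCases with
      | last => rw [hCtr]; exact hc0
      | cast j' =>
        rw [hCtl]
        refine hC'row j' fun h => hj ?_
        rw [h, Fin.castSucc_zero]


/-- **Modified LU decomposition.** If `A` is a complex `m × m` matrix with
`det (A^(k)) ≠ 0` for `k = 1, …, m` and `det (Â^(k)) ≠ 0` for `k = 1, …, m - 1`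
(where `Â` deletes the first column of `A`), then there are a unique lower triangular
`B` and a unique upper triangular `C`, with `C 0 0 = 1` and remaining first-row
entries `0`, such that `A = B * K * C`. -/

theorem modified_lu_decomposition (m : ℕ) (hm : 2 ≤ m)
    (A : Matrix (Fin m) (Fin m) ℂ)
    (hdet : ∀ k : ℕ, 1 ≤ k → ∀ hk : k ≤ m,
      (A.submatrix (Fin.castLE hk) (Fin.castLE hk)).det ≠ 0)
    (hdet' : ∀ k : ℕ, 1 ≤ k → ∀ hk : k ≤ m - 1,
      (Matrix.of fun a b : Fin k =>
        A (Fin.castLE (by omega) a) ⟨(b : ℕ) + 1, by have := b.isLt; omega⟩).det ≠ 0) :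
    ∃! BC : Matrix (Fin m) (Fin m) ℂ × Matrix (Fin m) (Fin m) ℂ,
      (∀ i j : Fin m, i < j → BC.1 i j = 0) ∧
      (∀ i j : Fin m, j < i → BC.2 i j = 0) ∧
      BC.2 ⟨0, by omega⟩ ⟨0, by omega⟩ = 1 ∧
      (∀ j : Fin m, j ≠ ⟨0, by omega⟩ → BC.2 ⟨0, by omega⟩ j = 0) ∧
      A = BC.1 * modK m * BC.2 := by
  obtain ⟨n, rfl⟩ : ∃ n, m = n + 1 := ⟨m - 1, by omega⟩
  obtain ⟨B, C, hB, hC, hC0, hCr, hA⟩ := lu_exists n A hdet hdet'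
  have hAdet : A.det ≠ 0 := by
    have h := hdet (n+1) (by omega) (le_refl (n+1))
    have heq : A.submatrix (Fin.castLE (le_refl (n+1))) (Fin.castLE (le_refl (n+1))) = A := by
      ext a b; rfl
    rwa [heq] at h
  refine ⟨(B, C), ⟨hB, hC, hC0, fun j hj => hCr j hj, hA⟩, ?_⟩
  rintro ⟨B₂, C₂⟩ ⟨h1, h2, h3, h4, h5⟩
  obtain ⟨hBeq, hCeq⟩ := lu_uniq A hAdet B₂ C₂ B C h1 h2 h3
    (fun j hj => h4 j hj) h5 hB hC hC0 hCr hA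
  exact Prod.ext hBeq hCeq
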